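/- Let G be a Hausdorff rectifiable space. If G is a sequential α₄-space, then G is Fréchet–Urysohn. -/

import Mathlib

open Filter Topology Set

lemma aux_mono_through (B : ℕ → Set ℕ) (hB : ∀ t, (B t).Infinite) :
    ∃ φ : ℕ → ℕ, StrictMono φ ∧ ∀ t, φ t ∈ B t := by
  have h : ∀ (t prev : ℕ), ∃ n, n ∈ B t ∧ prev < n := by
    intro t prev
    obtain ⟨b, hb, hb'⟩ := (hB t).exists_gt prev
    exact ⟨b, hb, hb'⟩
  choose f hf1 hf2 using h
  refine ⟨fun t => Nat.rec (f 0 0) (fun t ih => f (t + 1) ih) t, ?_, ?_⟩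
  · exact strictMono_nat_of_lt_succ fun t => hf2 _ _
  · intro t
    cases t with
    | zero => exact hf1 0 0
    | succ t => exact hf1 _ _

lemma aux_mono_through2 (N : Set ℕ) (k : ℕ → ℕ) (h : (k '' N).Infinite) :
    ∃ φ : ℕ → ℕ, StrictMono φ ∧ (∀ t, φ t ∈ N) ∧ StrictMono (k ∘ φ) := by
  have key : ∀ a b : ℕ, ∃ n, n ∈ N ∧ a < n ∧ b < k n := by
    intro a b
    have h1 : (k '' {n | n ∈ N ∧ a < n}).Infinite := by
      have hsub : k '' N ⊆ k '' {n | n ∈ N ∧ a < n} ∪ k '' {n | n ∈ N ∧ n ≤ a} := by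
        rintro v ⟨n, hn, rfl⟩
        rcases lt_or_ge a n with h' | h'
        · exact Or.inl ⟨n, ⟨hn, h'⟩, rfl⟩
        · exact Or.inr ⟨n, ⟨hn, h'⟩, rfl⟩
      have hfin : (k '' {n | n ∈ N ∧ n ≤ a}).Finite :=
        Set.Finite.image _ ((Set.finite_Iic a).subset fun n hn => hn.2)
      by_contra hcon
      rw [Set.not_infinite] at hcon
      exact h ((hcon.union hfin).subset hsub)
    obtain ⟨v, ⟨n, ⟨hn, hn'⟩, rfl⟩, hv'⟩ := h1.exists_gt b
    exact ⟨n, hn, hn', hv'⟩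
  choose f hf1 hf2 hf3 using fun a b => key a b
  refine ⟨fun t => Nat.rec (f 0 0) (fun _ ih => f ih (k ih)) t, ?_, ?_, ?_⟩
  · exact strictMono_nat_of_lt_succ fun t => hf2 _ _
  · intro t; cases t with
    | zero => exact hf1 0 0
    | succ t => exact hf1 _ _
  · exact strictMono_nat_of_lt_succ fun t => hf3 _ _

lemma aux_pigeonhole (N : Set ℕ) (k : ℕ → ℕ) (hN : N.Infinite) (h : ¬(k '' N).Infinite) :
    ∃ k₀, {n | n ∈ N ∧ k n = k₀}.Infinite := by
  by_contra hc
  push_neg at hc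
  apply hN
  rw [Set.not_infinite] at h
  have hsub : N ⊆ ⋃ v ∈ k '' N, {n | n ∈ N ∧ k n = v} := by
    intro n hn
    exact Set.mem_biUnion ⟨n, hn, rfl⟩ ⟨hn, rfl⟩
  exact (h.biUnion fun v _ => hc v).subset hsub

lemma aux_bound {I : Set ℕ} (hI : I.Finite) : ∃ i₁, ∀ i, i₁ ≤ i → i ∉ I := by
  obtain ⟨b, hb⟩ := hI.bddAbove
  exact ⟨b + 1, fun i hi hmem => by have := hb hmem; omega⟩

/-- A Hausdorff sequential rectifiable space with the α₄-property is
Fréchet–Urysohn. -/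
theorem stmt_10 {G : Type*} [TopologicalSpace G] [T2Space G] [SequentialSpace G]
    (p q : G → G → G)
    (hp : Continuous fun z : G × G => p z.1 z.2)
    (hq : Continuous fun z : G × G => q z.1 z.2)
    (e : G)
    (hpq : ∀ x y : G, p x (q x y) = y)
    (hqp : ∀ x y : G, q x (p x y) = y)
    (hqe : ∀ x : G, q x x = e)
    (halpha4 : ∀ x : G, ∀ S : ℕ → ℕ → G, (∀ n, Tendsto (S n) atTop (𝓝 x)) →
      ∃ s : ℕ → G, Tendsto s atTop (𝓝 x) ∧
        {n : ℕ | ∃ k m : ℕ, s k = S n m}.Infinite) :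
    FrechetUrysohnSpace G := by
  have key : ∀ A : Set G, IsSeqClosed (seqClosure A) := by
    intro A
    intro y x hy hyx
    by_contra hx
    -- `hx : x ∉ seqClosure A`
    -- continuity of F : (a, z) ↦ p a (q x z)
    have hF : Continuous fun w : G × G => p w.1 (q x w.2) := by
      have h1 : Continuous fun w : G × G => ((w.1, q x w.2) : G × G) := by
        refine continuous_fst.prodMk ?_
        have h0 : Continuous fun w : G × G => ((x, w.2) : G × G) :=
          continuous_const.prodMk continuous_snd
        exact hq.comp h0
      exact hp.comp h1
    have hFxx : p x (q x x) = x := hpq x x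
    -- Step 1 : replace y by a tail avoiding A
    have hyA : {n | y n ∈ A}.Finite := by
      by_contra hfin
      obtain ⟨φ, hφ, hφmem⟩ := aux_mono_through (fun _ => {n | y n ∈ A}) fun _ => hfin
      exact hx ⟨y ∘ φ, fun t => hφmem t, hyx.comp hφ.tendsto_atTop⟩
    obtain ⟨n₁, hn₁⟩ := aux_bound hyA
    set Y : ℕ → G := fun n => y (n + n₁) with hYdef
    have hY1 : ∀ n, Y n ∈ seqClosure A := fun n => hy (n + n₁)
    have hY2 : Tendsto Y atTop (𝓝 x) := hyx.comp (tendsto_add_atTop_nat n₁)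
    have hY3 : ∀ n, Y n ∉ A := fun n => hn₁ (n + n₁) (Nat.le_add_left n₁ n)
    -- heavy points
    set H : Set G := {c | c ≠ x ∧ {n | p (Y n) (q x c) ∈ A}.Infinite} with hHdef
    by_cases hP : ∃ (n₀ : ℕ) (h : ℕ → G), (∀ i, h i ∈ H ∧ p (Y n₀) (q x (h i)) ∈ A) ∧
        Tendsto (fun i => p (Y n₀) (q x (h i))) atTop (𝓝 (Y n₀))
    · -- Case 1 : heavy points accumulate to x, diagonalize
      obtain ⟨n₀, h, hmem, hconv⟩ := hP
      have hg : Continuous fun z : G => p x (q (Y n₀) z) := by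
        have h0 : Continuous fun z : G => ((Y n₀, z) : G × G) :=
          continuous_const.prodMk continuous_id
        have h1 : Continuous fun z : G => ((x, q (Y n₀) z) : G × G) :=
          continuous_const.prodMk (hq.comp h0)
        exact hp.comp h1
      have hhx : Tendsto h atTop (𝓝 x) := by
        have h1 : Tendsto (fun i => p x (q (Y n₀) (p (Y n₀) (q x (h i))))) atTop
            (𝓝 (p x (q (Y n₀) (Y n₀)))) := (hg.tendsto _).comp hconv
        have h2 : ∀ i, p x (q (Y n₀) (p (Y n₀) (q x (h i)))) = h i := by
          intro i; rw [hqp, hpq]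
        have h3 : p x (q (Y n₀) (Y n₀)) = x := by rw [hqe, ← hqe x, hpq]
        rw [h3] at h1
        exact h1.congr h2
      obtain ⟨φ, hφ, hφmem⟩ :=
        aux_mono_through (fun t => {n | p (Y n) (q x (h t)) ∈ A}) fun t => (hmem t).1.2
      refine hx ⟨fun t => p (Y (φ t)) (q x (h t)), fun t => hφmem t, ?_⟩
      have : Tendsto (fun t => ((Y (φ t)), h t)) atTop (𝓝 (x, x)) :=
        (hY2.comp hφ.tendsto_atTop).prodMk_nhds hhx
      have := (hF.tendsto (x, x)).comp this
      simpa [hFxx, Function.comp_def] using this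
    · -- Case 2 : choose approximating sequences avoiding heavy translates
      have hS : ∀ n, ∃ S : ℕ → G, (∀ m, S m ∈ A) ∧ Tendsto S atTop (𝓝 (Y n)) ∧
          ∀ m, ¬∃ c ∈ H, S m = p (Y n) (q x c) := by
        intro n
        obtain ⟨v, hv, hvt⟩ := hY1 n
        have hI : {i | ∃ c ∈ H, v i = p (Y n) (q x c)}.Finite := by
          by_contra hIinf
          obtain ⟨φ, hφ, hφmem⟩ :=
            aux_mono_through (fun _ => {i | ∃ c ∈ H, v i = p (Y n) (q x c)}) fun _ => hIinf
          choose c hc1 hc2 using fun t => hφmem t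
          refine hP ⟨n, c, fun t => ⟨hc1 t, ?_⟩, ?_⟩
          · rw [← hc2 t]; exact hv _
          · exact ((hvt.comp hφ.tendsto_atTop).congr fun t => hc2 t)
        obtain ⟨i₁, hi₁⟩ := aux_bound hI
        refine ⟨fun m => v (m + i₁), fun m => hv _, hvt.comp (tendsto_add_atTop_nat i₁), ?_⟩
        intro m hm
        exact hi₁ (m + i₁) (Nat.le_add_left i₁ m) hm
      choose S hS1 hS2 hS3 using hS
      set θ : ℕ → ℕ → G := fun n m => p x (q (Y n) (S n m)) with hθdef
      have hθ : ∀ n, Tendsto (θ n) atTop (𝓝 x) := by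
        intro n
        have hg : Continuous fun z : G => p x (q (Y n) z) := by
          have h0 : Continuous fun z : G => ((Y n, z) : G × G) :=
            continuous_const.prodMk continuous_id
          have h1 : Continuous fun z : G => ((x, q (Y n) z) : G × G) :=
            continuous_const.prodMk (hq.comp h0)
          exact hp.comp h1
        have h1 : Tendsto (θ n) atTop (𝓝 (p x (q (Y n) (Y n)))) := (hg.tendsto _).comp (hS2 n)
        have h3 : p x (q (Y n) (Y n)) = x := by rw [hqe, ← hqe x, hpq]
        rwa [h3] at h1
      obtain ⟨s, hst, hNinf⟩ := halpha4 x θ hθ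
      set N : Set ℕ := {n | ∃ k m, s k = θ n m} with hNdef
      have hchoice : ∀ n, ∃ km : ℕ × ℕ, n ∈ N → s km.1 = θ n km.2 := by
        intro n
        by_cases hn : n ∈ N
        · obtain ⟨k, m, hkm⟩ := hn
          exact ⟨(k, m), fun _ => hkm⟩
        · exact ⟨(0, 0), fun h' => absurd h' hn⟩
      choose km hkm using hchoice
      set k : ℕ → ℕ := fun n => (km n).1 with hkdef
      set m : ℕ → ℕ := fun n => (km n).2 with hmdef
      -- the key computation
      have hcomp : ∀ n ∈ N, p (Y n) (q x (s (k n))) = S n (m n) := by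
        intro n hn
        have h1 : s (k n) = p x (q (Y n) (S n (m n))) := hkm n hn
        rw [h1, hqp, hpq]
      by_cases hk2 : (k '' N).Infinite
      · -- Subcase 2a
        obtain ⟨φ, hφ, hφN, hkφ⟩ := aux_mono_through2 N k hk2
        refine hx ⟨fun t => S (φ t) (m (φ t)), fun t => hS1 _ _, ?_⟩
        have h1 : Tendsto (fun t => ((Y (φ t)), s (k (φ t)))) atTop (𝓝 (x, x)) :=
          (hY2.comp hφ.tendsto_atTop).prodMk_nhds (hst.comp hkφ.tendsto_atTop)
        have h2 := (hF.tendsto (x, x)).comp h1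
        rw [hFxx] at h2
        exact h2.congr fun t => hcomp (φ t) (hφN t)
      · -- Subcase 2b
        obtain ⟨k₀, hk₀⟩ := aux_pigeonhole N k hNinf hk2
        set c : G := s k₀ with hcdef
        have hcA : ∀ n, n ∈ N ∧ k n = k₀ → p (Y n) (q x c) ∈ A := by
          rintro n ⟨hn, hkn⟩
          have := hcomp n hn
          rw [hkn] at this
          rw [this]
          exact hS1 n (m n)
        obtain ⟨nn, hnn⟩ := hk₀.nonempty
        have hcne : c ≠ x := by
          intro hcx
          have h1 := hcomp nn hnn.1
          rw [hnn.2] at h1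
          rw [← hcdef] at h1
          rw [hcx] at h1
          rw [hqe, ← hqe (Y nn), hpq] at h1
          exact hY3 nn (h1 ▸ hS1 nn (m nn))
        have hcH : c ∈ H := by
          refine ⟨hcne, Set.Infinite.mono ?_ hk₀⟩
          intro n hn
          exact hcA n hn
        refine hS3 nn (m nn) ⟨c, hcH, ?_⟩
        have h1 := hcomp nn hnn.1
        rw [hnn.2, ← hcdef] at h1
        exact h1.symm
  refine ⟨fun s => ?_⟩
  exact closure_minimal subset_seqClosure (key s).isClosed
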